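/- Let n ≥ 2 and let U ⊆ ℝⁿ be a ball of diameter at most 1. For x,y,z ∈ U let α(x,y,z) denote the area of the triangle spanned by x,y,z, namely α(x,y,z) = (1/2)·√(‖y−x‖²·‖z−x‖² − ⟨y−x, z−x⟩²). Then α satisfies on U: (Sym) α is invariant under all permutations of its three arguments; (Tetr) α(a,b,c) ≤ α(a,b,x) + α(b,c,x) + α(a,c,x) for all a,b,c,x ∈ U; (Z) α(a,b,b) = 0 for all a,b ∈ U; (N) for all a ≠ b in U there exists c ∈ U with α(a,b,c) ≠ 0; (B) α(x,y,z) ≤ 1 for all x,y,z ∈ U; and (Trans) α(a,b,x)·α(c,x,y) ≤ α(a,x,y) + α(b,x,y) for all a,b,c,x,y ∈ U. -/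

import Mathlib

open Filter Topology

noncomputable def Fw (n : ℕ) (u v : EuclideanSpace ℝ (Fin n)) :
    EuclideanSpace ℝ (Fin n × Fin n) :=
  WithLp.toLp 2 (fun p : Fin n × Fin n => u p.1 * v p.2 - u p.2 * v p.1)

lemma normsq_Fw (n : ℕ) (u v : EuclideanSpace ℝ (Fin n)) :
    ‖Fw n u v‖ ^ 2 = 2 * (‖u‖ ^ 2 * ‖v‖ ^ 2 - (inner ℝ u v : ℝ) ^ 2) := by
  have h1 : ‖Fw n u v‖ ^ 2 = ∑ p : Fin n × Fin n, (Fw n u v p) ^ 2 := by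
    rw [EuclideanSpace.norm_eq, Real.sq_sqrt (by positivity)]
    simp [Real.norm_eq_abs, sq_abs]
  have h2 : ‖u‖ ^ 2 = ∑ i, (u i) ^ 2 := by
    rw [EuclideanSpace.norm_eq, Real.sq_sqrt (by positivity)]
    simp [Real.norm_eq_abs, sq_abs]
  have h3 : ‖v‖ ^ 2 = ∑ i, (v i) ^ 2 := by
    rw [EuclideanSpace.norm_eq, Real.sq_sqrt (by positivity)]
    simp [Real.norm_eq_abs, sq_abs]
  have h4 : (inner ℝ u v : ℝ) = ∑ i, u i * v i := by
    simp [PiLp.inner_apply, RCLike.inner_apply, mul_comm]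
  rw [h1, h2, h3, h4, Fintype.sum_prod_type]
  have inner_eq : ∀ i, (∑ j, (Fw n u v (i, j)) ^ 2)
      = (∑ j, (u i)^2 * (v j)^2) + (∑ j, (u j)^2 * (v i)^2)
        - ∑ j, 2 * ((u i * v i) * (u j * v j)) := fun i => by
    rw [← Finset.sum_add_distrib, ← Finset.sum_sub_distrib]
    exact Finset.sum_congr rfl fun j _ => by simp only [Fw, PiLp.toLp_apply]; ring
  calc (∑ i, ∑ j, (Fw n u v (i, j)) ^ 2)
      = ∑ i, ((∑ j, (u i)^2 * (v j)^2) + (∑ j, (u j)^2 * (v i)^2)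
          - ∑ j, 2 * ((u i * v i) * (u j * v j))) :=
        Finset.sum_congr rfl fun i _ => inner_eq i
    _ = (∑ i, ∑ j, (u i)^2 * (v j)^2) + (∑ i, ∑ j, (u j)^2 * (v i)^2)
        - ∑ i, ∑ j, 2 * ((u i * v i) * (u j * v j)) := by
        rw [Finset.sum_sub_distrib, Finset.sum_add_distrib]
    _ = 2 * ((∑ i, (u i)^2) * (∑ i, (v i)^2) - (∑ i, u i * v i) ^ 2) := by
        have e1 : (∑ i, (u i)^2) * (∑ i, (v i)^2) = ∑ i, ∑ j, (u i)^2 * (v j)^2 :=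
          Finset.sum_mul_sum _ _ _ _
        have e2 : (∑ i, ∑ j, (u j)^2 * (v i)^2) = ∑ j, ∑ i, (u j)^2 * (v i)^2 :=
          Finset.sum_comm
        have e3 : (∑ i, u i * v i) ^ 2 = ∑ i, ∑ j, (u i * v i) * (u j * v j) := by
          rw [sq]; exact Finset.sum_mul_sum _ _ _ _
        have e4 : (∑ i, ∑ j, 2 * ((u i * v i) * (u j * v j)))
            = 2 * ∑ i, ∑ j, (u i * v i) * (u j * v j) := by
          rw [Finset.mul_sum]
          exact Finset.sum_congr rfl fun i _ => (Finset.mul_sum _ _ _).symm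
        rw [e1, e2, e3, e4]; ring


lemma E_nonneg (n : ℕ) (u v : EuclideanSpace ℝ (Fin n)) :
    0 ≤ ‖u‖ ^ 2 * ‖v‖ ^ 2 - (inner ℝ u v : ℝ) ^ 2 := by
  nlinarith [normsq_Fw n u v, sq_nonneg ‖Fw n u v‖]

lemma norm_Fw_eq (n : ℕ) (u v : EuclideanSpace ℝ (Fin n)) :
    ‖Fw n u v‖ = Real.sqrt 2 * Real.sqrt (‖u‖ ^ 2 * ‖v‖ ^ 2 - (inner ℝ u v : ℝ) ^ 2) := by
  rw [← Real.sqrt_sq (norm_nonneg (Fw n u v)), normsq_Fw,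
    Real.sqrt_mul (by norm_num : (0:ℝ) ≤ 2)]

lemma norm_Fw_le (n : ℕ) (u v : EuclideanSpace ℝ (Fin n)) :
    ‖Fw n u v‖ ≤ Real.sqrt 2 * (‖u‖ * ‖v‖) := by
  rw [norm_Fw_eq]
  have h1 : Real.sqrt (‖u‖ ^ 2 * ‖v‖ ^ 2 - (inner ℝ u v : ℝ) ^ 2) ≤ ‖u‖ * ‖v‖ := by
    rw [show ‖u‖ * ‖v‖ = Real.sqrt ((‖u‖ * ‖v‖) ^ 2) from (Real.sqrt_sq (by positivity)).symm]
    apply Real.sqrt_le_sqrt; nlinarith [sq_nonneg ((inner ℝ u v : ℝ))]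
  have h2 : (0:ℝ) ≤ Real.sqrt 2 := Real.sqrt_nonneg 2
  nlinarith [Real.sqrt_nonneg (‖u‖ ^ 2 * ‖v‖ ^ 2 - (inner ℝ u v : ℝ) ^ 2)]

lemma norm_Fw_orth (n : ℕ) (u v : EuclideanSpace ℝ (Fin n))
    (h : (inner ℝ u v : ℝ) = 0) :
    ‖Fw n u v‖ = Real.sqrt 2 * (‖u‖ * ‖v‖) := by
  rw [norm_Fw_eq, h, show ‖u‖ ^ 2 * ‖v‖ ^ 2 - (0:ℝ) ^ 2 = (‖u‖ * ‖v‖) ^ 2 by ring,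
    Real.sqrt_sq (by positivity)]

lemma orth_exists (n : ℕ) (hn : 2 ≤ n) (v : EuclideanSpace ℝ (Fin n)) (hv : v ≠ 0) :
    ∃ w : EuclideanSpace ℝ (Fin n), w ≠ 0 ∧ (inner ℝ v w : ℝ) = 0 := by
  have hrank : Module.finrank ℝ (ℝ ∙ v) + Module.finrank ℝ (ℝ ∙ v)ᗮ = n := by
    rw [Submodule.finrank_add_finrank_orthogonal]
    simp [finrank_euclideanSpace_fin]
  have h1 : Module.finrank ℝ (ℝ ∙ v) = 1 := finrank_span_singleton hv
  have hKpos : 0 < Module.finrank ℝ (ℝ ∙ v)ᗮ := by omega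
  have hKne : (ℝ ∙ v)ᗮ ≠ ⊥ := by
    intro h; rw [h] at hKpos; simp at hKpos
  obtain ⟨w, hwK, hw0⟩ := Submodule.exists_mem_ne_zero_of_ne_bot hKne
  exact ⟨w, hw0, (Submodule.mem_orthogonal (ℝ ∙ v) w).mp hwK v
    (Submodule.mem_span_singleton_self v)⟩

set_option maxHeartbeats 1000000 in
theorem stmt_19 (n : ℕ) (hn : 2 ≤ n)
    (c : EuclideanSpace ℝ (Fin n)) (r : ℝ) (hr : 2 * r ≤ 1)
    (U : Set (EuclideanSpace ℝ (Fin n))) (hU : U = Metric.ball c r)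
    (α : EuclideanSpace ℝ (Fin n) → EuclideanSpace ℝ (Fin n) →
      EuclideanSpace ℝ (Fin n) → ℝ)
    (hα : ∀ x y z : EuclideanSpace ℝ (Fin n),
      α x y z = (1 / 2) * Real.sqrt (‖y - x‖ ^ 2 * ‖z - x‖ ^ 2 -
        (inner ℝ (y - x) (z - x) : ℝ) ^ 2)) :
    (∀ x ∈ U, ∀ y ∈ U, ∀ z ∈ U, α x y z = α y x z ∧ α x y z = α x z y) ∧
    (∀ a ∈ U, ∀ b ∈ U, ∀ c' ∈ U, ∀ x ∈ U,
      α a b c' ≤ α a b x + α b c' x + α a c' x) ∧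
    (∀ a ∈ U, ∀ b ∈ U, α a b b = 0) ∧
    (∀ a ∈ U, ∀ b ∈ U, a ≠ b → ∃ c' ∈ U, α a b c' ≠ 0) ∧
    (∀ x ∈ U, ∀ y ∈ U, ∀ z ∈ U, α x y z ≤ 1) ∧
    (∀ a ∈ U, ∀ b ∈ U, ∀ c' ∈ U, ∀ x ∈ U, ∀ y ∈ U,
      α a b x * α c' x y ≤ α a x y + α b x y) := by
  subst hU
  have hs : (0:ℝ) < Real.sqrt 2 := by positivity
  have key : ∀ x y z, α x y z = ‖Fw n (y - x) (z - x)‖ / (2 * Real.sqrt 2) := by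
    intro x y z
    rw [hα, norm_Fw_eq]
    field_simp
  have hnonneg : ∀ x y z, 0 ≤ α x y z := fun x y z => by
    rw [key]; positivity
  have hswap1 : ∀ x y z, α x y z = α y x z := by
    intro x y z
    have h : Fw n (x - y) (z - y) = -(Fw n (y - x) (z - x)) := by
      ext p; simp only [Fw, PiLp.toLp_apply, PiLp.sub_apply, PiLp.neg_apply]; ring
    rw [key, key, h, norm_neg]
  have hswap2 : ∀ x y z, α x y z = α x z y := by
    intro x y z
    have h : Fw n (z - x) (y - x) = -(Fw n (y - x) (z - x)) := by
      ext p; simp only [Fw, PiLp.toLp_apply, PiLp.sub_apply, PiLp.neg_apply]; ring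
    rw [key, key, h, norm_neg]
  have tetr : ∀ a b c' x, α a b c' ≤ α a b x + α b c' x + α a c' x := by
    intro a b c' x
    have hid : Fw n (b - a) (c' - a)
        = Fw n (b - a) (x - a) + Fw n (c' - b) (x - b) - Fw n (c' - a) (x - a) := by
      ext p; simp only [Fw, PiLp.toLp_apply, PiLp.sub_apply, PiLp.add_apply]; ring
    rw [key a b c', key a b x, key b c' x, key a c' x, ← add_div, ← add_div]
    gcongr
    calc ‖Fw n (b - a) (c' - a)‖
        = ‖Fw n (b - a) (x - a) + Fw n (c' - b) (x - b) - Fw n (c' - a) (x - a)‖ := by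
          rw [hid]
      _ ≤ ‖Fw n (b - a) (x - a) + Fw n (c' - b) (x - b)‖ + ‖Fw n (c' - a) (x - a)‖ :=
          norm_sub_le _ _
      _ ≤ ‖Fw n (b - a) (x - a)‖ + ‖Fw n (c' - b) (x - b)‖ + ‖Fw n (c' - a) (x - a)‖ := by
          gcongr; exact norm_add_le _ _
  have hball : ∀ p ∈ Metric.ball c r, ∀ q ∈ Metric.ball c r, ‖p - q‖ ≤ 1 := by
    intro p hp q hq
    rw [Metric.mem_ball] at hp hq
    rw [← dist_eq_norm]
    have h1 : dist p q ≤ dist p c + dist c q := dist_triangle _ _ _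
    have h2 : dist c q = dist q c := dist_comm _ _
    linarith
  refine ⟨fun x _ y _ z _ => ⟨hswap1 x y z, hswap2 x y z⟩,
    fun a _ b _ c' _ x _ => tetr a b c' x, ?_, ?_, ?_, ?_⟩
  · -- Z
    intro a _ b _
    have h : Fw n (b - a) (b - a) = 0 := by
      ext p; simp only [Fw, PiLp.toLp_apply, PiLp.zero_apply]; ring
    rw [key, h, norm_zero, zero_div]
  · -- N
    intro a ha b hb hab
    have hv : b - a ≠ 0 := sub_ne_zero.mpr (Ne.symm hab)
    obtain ⟨w, hw0, hworth⟩ := orth_exists n hn (b - a) hv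
    have hwpos : 0 < ‖w‖ := norm_pos_iff.mpr hw0
    rw [Metric.mem_ball] at ha
    set t := (r - dist a c) / (2 * ‖w‖) with ht
    have htpos : 0 < t := div_pos (by linarith) (by positivity)
    refine ⟨a + t • w, ?_, ?_⟩
    · rw [Metric.mem_ball]
      calc dist (a + t • w) c ≤ dist (a + t • w) a + dist a c := dist_triangle _ _ _
        _ = t * ‖w‖ + dist a c := by
            rw [dist_eq_norm, add_sub_cancel_left, norm_smul, Real.norm_eq_abs,
              abs_of_pos htpos]
        _ = (r - dist a c) / 2 + dist a c := by
            rw [ht]; field_simp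
        _ < r := by linarith
    · rw [hα]
      have e1 : a + t • w - a = t • w := add_sub_cancel_left a (t • w)
      rw [e1]
      have e2 : (inner ℝ (b - a) (t • w) : ℝ) = 0 := by
        rw [real_inner_smul_right, hworth, mul_zero]
      rw [e2]
      have hpos : 0 < ‖b - a‖ ^ 2 * ‖t • w‖ ^ 2 - (0:ℝ) ^ 2 := by
        have h1 : 0 < ‖t • w‖ := norm_pos_iff.mpr (smul_ne_zero (ne_of_gt htpos) hw0)
        have h2 : 0 < ‖b - a‖ := norm_pos_iff.mpr hv
        have h3 := mul_pos (pow_pos h2 2) (pow_pos h1 2)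
        nlinarith
      exact ne_of_gt (mul_pos (by norm_num) (Real.sqrt_pos.mpr hpos))
  · -- B
    intro x hx y hy z hz
    rw [hα]
    have h1 : ‖y - x‖ ≤ 1 := hball y hy x hx
    have h2 : ‖z - x‖ ≤ 1 := hball z hz x hx
    have h3 : Real.sqrt (‖y - x‖ ^ 2 * ‖z - x‖ ^ 2 - (inner ℝ (y - x) (z - x) : ℝ) ^ 2) ≤ 1 := by
      apply Real.sqrt_le_one.mpr
      have p1 : ‖y - x‖ ^ 2 ≤ 1 := by nlinarith [norm_nonneg (y - x)]
      have p2 : ‖z - x‖ ^ 2 ≤ 1 := by nlinarith [norm_nonneg (z - x)]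
      have p3 : ‖y - x‖ ^ 2 * ‖z - x‖ ^ 2 ≤ 1 := by
        nlinarith [sq_nonneg ‖y - x‖, sq_nonneg ‖z - x‖]
      nlinarith [sq_nonneg ((inner ℝ (y - x) (z - x) : ℝ))]
    linarith
  · -- Trans
    intro a ha b hb c' hc' x hx y hy
    have hA : ‖a - x‖ ≤ 1 := hball a ha x hx
    have hB : ‖b - x‖ ≤ 1 := hball b hb x hx
    have hC : ‖c' - x‖ ≤ 1 := hball c' hc' x hx
    have main : ‖Fw n (a - x) (b - x)‖ * ‖y - x‖
        ≤ ‖Fw n (a - x) (y - x)‖ + ‖Fw n (b - x) (y - x)‖ := by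
      rcases eq_or_ne (y - x) 0 with h0 | h0
      · rw [h0, norm_zero, mul_zero]
        positivity
      · have hu : 0 < ‖y - x‖ := norm_pos_iff.mpr h0
        set A := a - x
        set B := b - x
        set u := y - x
        set tA := (inner ℝ A u : ℝ) / ‖u‖ ^ 2 with htA
        set tB := (inner ℝ B u : ℝ) / ‖u‖ ^ 2 with htB
        have horthA : (inner ℝ (A - tA • u) u : ℝ) = 0 := by
          rw [inner_sub_left, real_inner_smul_left, htA, real_inner_self_eq_norm_sq]
          field_simp; ring
        have horthB : (inner ℝ (B - tB • u) u : ℝ) = 0 := by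
          rw [inner_sub_left, real_inner_smul_left, htB, real_inner_self_eq_norm_sq]
          field_simp; ring
        have hFA : ‖Fw n A u‖ = Real.sqrt 2 * (‖A - tA • u‖ * ‖u‖) := by
          rw [show Fw n A u = Fw n (A - tA • u) u from by
            ext p; simp only [Fw, PiLp.toLp_apply, PiLp.sub_apply, PiLp.smul_apply, smul_eq_mul]; ring]
          exact norm_Fw_orth n _ _ horthA
        have hFB : ‖Fw n B u‖ = Real.sqrt 2 * (‖B - tB • u‖ * ‖u‖) := by
          rw [show Fw n B u = Fw n (B - tB • u) u from by
            ext p; simp only [Fw, PiLp.toLp_apply, PiLp.sub_apply, PiLp.smul_apply, smul_eq_mul]; ring]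
          exact norm_Fw_orth n _ _ horthB
        have hid2 : Fw n A B = Fw n (tA • u) (B - tB • u) + Fw n (A - tA • u) B := by
          ext p
          simp only [Fw, PiLp.toLp_apply, PiLp.sub_apply, PiLp.add_apply, PiLp.smul_apply, smul_eq_mul]
          ring
        have hproj : ‖tA • u‖ ≤ ‖A‖ := by
          rw [norm_smul, Real.norm_eq_abs, htA, abs_div,
            abs_of_nonneg (by positivity : (0:ℝ) ≤ ‖u‖ ^ 2),
            div_mul_eq_mul_div, div_le_iff₀ (by positivity)]
          have h := abs_real_inner_le_norm A u
          nlinarith [norm_nonneg A, norm_nonneg u, abs_nonneg (inner ℝ A u : ℝ)]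
        have htot : ‖Fw n A B‖
            ≤ Real.sqrt 2 * ‖B - tB • u‖ + Real.sqrt 2 * ‖A - tA • u‖ := by
          have c1 : ‖Fw n A B‖ ≤ ‖Fw n (tA • u) (B - tB • u)‖ + ‖Fw n (A - tA • u) B‖ := by
            rw [hid2]; exact norm_add_le _ _
          have c2 := norm_Fw_le n (tA • u) (B - tB • u)
          have c3 := norm_Fw_le n (A - tA • u) B
          have n1 : (0:ℝ) ≤ ‖B - tB • u‖ := norm_nonneg _
          have n2 : (0:ℝ) ≤ ‖A - tA • u‖ := norm_nonneg _
          have n3 : (0:ℝ) ≤ ‖tA • u‖ := norm_nonneg _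
          have n4 : (0:ℝ) ≤ ‖B‖ := norm_nonneg _
          have htAu1 : ‖tA • u‖ ≤ 1 := hproj.trans hA
          calc ‖Fw n A B‖ ≤ ‖Fw n (tA • u) (B - tB • u)‖ + ‖Fw n (A - tA • u) B‖ := c1
            _ ≤ Real.sqrt 2 * (‖tA • u‖ * ‖B - tB • u‖)
                + Real.sqrt 2 * (‖A - tA • u‖ * ‖B‖) := add_le_add c2 c3
            _ ≤ Real.sqrt 2 * (1 * ‖B - tB • u‖) + Real.sqrt 2 * (‖A - tA • u‖ * 1) := by
                have g1 : ‖tA • u‖ * ‖B - tB • u‖ ≤ 1 * ‖B - tB • u‖ :=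
                  mul_le_mul_of_nonneg_right htAu1 n1
                have g2 : ‖A - tA • u‖ * ‖B‖ ≤ ‖A - tA • u‖ * 1 :=
                  mul_le_mul_of_nonneg_left hB n2
                have g3 := mul_le_mul_of_nonneg_left g1 hs.le
                have g4 := mul_le_mul_of_nonneg_left g2 hs.le
                linarith
            _ = Real.sqrt 2 * ‖B - tB • u‖ + Real.sqrt 2 * ‖A - tA • u‖ := by ring
        calc ‖Fw n A B‖ * ‖u‖
            ≤ (Real.sqrt 2 * ‖B - tB • u‖ + Real.sqrt 2 * ‖A - tA • u‖) * ‖u‖ :=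
              mul_le_mul_of_nonneg_right htot (norm_nonneg u)
          _ = ‖Fw n A u‖ + ‖Fw n B u‖ := by rw [hFA, hFB]; ring
    have l1 : α a b x = ‖Fw n (a - x) (b - x)‖ / (2 * Real.sqrt 2) := by
      rw [hswap2 a b x, hswap1 a x b, key]
    have l2 : α c' x y ≤ ‖y - x‖ / 2 := by
      rw [hswap1 c' x y, key]
      have h1 := norm_Fw_le n (c' - x) (y - x)
      have h2 : ‖c' - x‖ * ‖y - x‖ ≤ ‖y - x‖ := by
        nlinarith [norm_nonneg (c' - x), norm_nonneg (y - x)]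
      rw [div_le_div_iff₀ (by positivity) (by norm_num)]
      have g3 := mul_le_mul_of_nonneg_left h2 hs.le
      nlinarith [norm_nonneg (Fw n (c' - x) (y - x)), norm_nonneg (y - x), hs.le, g3, h1]
    have l3 : α a x y = ‖Fw n (a - x) (y - x)‖ / (2 * Real.sqrt 2) := by
      rw [hswap1 a x y, key]
    have l4 : α b x y = ‖Fw n (b - x) (y - x)‖ / (2 * Real.sqrt 2) := by
      rw [hswap1 b x y, key]
    have hc0 : 0 ≤ α c' x y := hnonneg _ _ _
    have hab0 : (0:ℝ) ≤ ‖Fw n (a - x) (b - x)‖ / (2 * Real.sqrt 2) := by positivity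
    calc α a b x * α c' x y
        ≤ (‖Fw n (a - x) (b - x)‖ / (2 * Real.sqrt 2)) * (‖y - x‖ / 2) := by
          rw [l1]; exact mul_le_mul_of_nonneg_left l2 hab0
      _ = (‖Fw n (a - x) (b - x)‖ * ‖y - x‖) / (2 * Real.sqrt 2) / 2 := by ring
      _ ≤ (‖Fw n (a - x) (y - x)‖ + ‖Fw n (b - x) (y - x)‖) / (2 * Real.sqrt 2) / 2 := by
          gcongr
      _ ≤ (‖Fw n (a - x) (y - x)‖ + ‖Fw n (b - x) (y - x)‖) / (2 * Real.sqrt 2) := by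
          have : (0:ℝ) ≤ (‖Fw n (a - x) (y - x)‖ + ‖Fw n (b - x) (y - x)‖) / (2 * Real.sqrt 2) := by
            positivity
          linarith
      _ = α a x y + α b x y := by rw [l3, l4, ← add_div]
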